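/- Let F be a field, N ≥ 1, and let Gm be a simple graph on Fin N (the moral graph). Let Φ be an invertible N×N matrix over F such that for all p ≠ q, (Φ⁻¹) p q ≠ 0 implies p and q are adjacent in Gm. Let H be a diagonal matrix with nonzero diagonal entries, let H' be another diagonal matrix with nonzero diagonal entries, let Z ⊆ Fin N be a finite set of perturbed nodes, and let θ : Fin N → F with θ v = 0 for v ∉ Z. Suppose Ψ = H·Φ·H' + Σ_{v ∈ Z} θ v • (E_{vv}) is invertible, where E_{vv} is the matrix with a single 1 in entry (v,v) and zeros elsewhere. Then for all p ≠ q, (Ψ⁻¹) p q ≠ 0 implies that p and q are adjacent in the perturbed graph Gm_Z, i.e., there exists a walk in Gm from p to q all of whose intermediate vertices lie in Z. (This is the matrix-algebra content of Theorem 3: the inverse power spectrum of corrupted data streams has nonzero off-diagonal entries only at neighbor pairs of the perturbed moral graph.) -/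

import Mathlib

open Matrix

def PerturbedAdj {V : Type*} (G : SimpleGraph V) (Z : Set V) (p q : V) : Prop :=
  p ≠ q ∧ ∃ w : G.Walk p q, ∀ v ∈ w.support, v ≠ p → v ≠ q → v ∈ Z

section Aux

variable {F : Type*} [Field F] {N : ℕ}

theorem key_lemma (Gm : SimpleGraph (Fin N))
    (Φ : Matrix (Fin N) (Fin N) F) (hΦ : IsUnit Φ.det)
    (hmoral : ∀ p q : Fin N, p ≠ q → Φ⁻¹ p q ≠ 0 → Gm.Adj p q)
    (Z : Finset (Fin N)) (d : Fin N → F) (hd : ∀ v ∉ Z, d v = 0)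
    (M : Matrix (Fin N) (Fin N) F) (hM : M = Φ + Matrix.diagonal d)
    (hMu : IsUnit M.det) :
    ∀ p q : Fin N, p ≠ q → M⁻¹ p q ≠ 0 →
      ∃ w : Gm.Walk p q, ∀ v ∈ w.support, v ≠ p → v ≠ q → v ∈ Z := by
  classical
  set A := Φ⁻¹ with hAdef
  set D : Matrix (Fin N) (Fin N) F := Matrix.diagonal d with hDdef
  set P : Matrix (Fin N) (Fin N) F :=
    Matrix.diagonal (fun i => if i ∈ Z then (1 : F) else 0) with hPdef
  set Q : Matrix (Fin N) (Fin N) F :=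
    Matrix.diagonal (fun i => if i ∈ Z then (0 : F) else 1) with hQdef
  have hPQ1 : P + Q = 1 := by
    rw [hPdef, hQdef, Matrix.diagonal_add, ← Matrix.diagonal_one]
    exact congrArg Matrix.diagonal (funext fun i => by by_cases hi : i ∈ Z <;> simp [hi])
  have hDQ : D * Q = 0 := by
    rw [hDdef, hQdef, Matrix.diagonal_mul_diagonal, ← Matrix.diagonal_zero]
    exact congrArg Matrix.diagonal
      (funext fun i => by by_cases hi : i ∈ Z <;> simp [hi, hd i])
  have hDP : D * P = D := by
    rw [hDdef, hPdef, Matrix.diagonal_mul_diagonal]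
    exact congrArg Matrix.diagonal
      (funext fun i => by by_cases hi : i ∈ Z <;> simp [hi, hd i])
  have hPP : P * P = P := by
    rw [hPdef, Matrix.diagonal_mul_diagonal]
    exact congrArg Matrix.diagonal (funext fun i => by by_cases hi : i ∈ Z <;> simp [hi])
  have hQP : Q * P = 0 := by
    rw [hPdef, hQdef, Matrix.diagonal_mul_diagonal, ← Matrix.diagonal_zero]
    exact congrArg Matrix.diagonal (funext fun i => by by_cases hi : i ∈ Z <;> simp [hi])
  have hPQ : P * Q = 0 := by
    rw [hPdef, hQdef, Matrix.diagonal_mul_diagonal, ← Matrix.diagonal_zero]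
    exact congrArg Matrix.diagonal (funext fun i => by by_cases hi : i ∈ Z <;> simp [hi])
  have hP1Q : P = 1 - Q := eq_sub_of_add_eq hPQ1
  have hQ1P : Q = 1 - P := eq_sub_of_add_eq (by rw [add_comm]; exact hPQ1)
  set K : Matrix (Fin N) (Fin N) F := A * M with hKdef
  have hAu : IsUnit A.det := Matrix.isUnit_nonsing_inv_det Φ hΦ
  have hKu : IsUnit K.det := by rw [hKdef, Matrix.det_mul]; exact hAu.mul hMu
  have hK1 : K = 1 + A * D := by
    rw [hKdef, hM, Matrix.mul_add, hAdef, Matrix.nonsing_inv_mul Φ hΦ]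
  set L : Matrix (Fin N) (Fin N) F := 1 + P * (A * D) with hLdef
  set J : Matrix (Fin N) (Fin N) F := P * K⁻¹ * P + Q with hJdef
  have hKQ : K * Q = Q := by
    rw [hK1, add_mul, one_mul, mul_assoc, hDQ, mul_zero, add_zero]
  have hKiQ : K⁻¹ * Q = Q := by
    conv_lhs => rw [← hKQ, ← mul_assoc, Matrix.nonsing_inv_mul K hKu, one_mul]
  have hKiAD : K⁻¹ * (A * D) = 1 - K⁻¹ := by
    have e : A * D = K - 1 := by rw [hK1, add_sub_cancel_left]
    rw [e, mul_sub, Matrix.nonsing_inv_mul K hKu, mul_one]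
  have hKiP : K⁻¹ * P = K⁻¹ - Q := by
    rw [hP1Q, mul_sub, mul_one, hKiQ]
  have hKPe : K⁻¹ * P + A * (D * (K⁻¹ * P)) = P := by
    have e : (1 + A * D) * (K⁻¹ * P) = P := by
      rw [← hK1, ← mul_assoc, Matrix.mul_nonsing_inv K hKu, one_mul]
    calc K⁻¹ * P + A * (D * (K⁻¹ * P))
        = (1 + A * D) * (K⁻¹ * P) := by rw [add_mul, one_mul, mul_assoc]
      _ = P := e
  have hLJ : L * J = 1 := by
    have e1 : D * (P * (K⁻¹ * P)) = D * (K⁻¹ * P) := by rw [← mul_assoc, hDP]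
    rw [hLdef, hJdef]
    simp only [add_mul, mul_add, one_mul, mul_assoc, e1, hDQ, mul_zero, add_zero]
    have e5 : P * (K⁻¹ * P) + P * (A * (D * (K⁻¹ * P))) = P := by
      rw [← mul_add, hKPe, hPP]
    rw [e5, hPQ1]
  have hJL : J * L = 1 := by
    have e2 : P * (P * (A * D)) = P * (A * D) := by rw [← mul_assoc, hPP]
    have e3 : Q * (P * (A * D)) = 0 := by rw [← mul_assoc, hQP, zero_mul]
    have e4 : K⁻¹ * (P * (A * D)) = (1 - K⁻¹) - Q * (A * D) := by
      rw [hP1Q, sub_mul, one_mul, mul_sub, hKiAD, ← mul_assoc, hKiQ]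
    rw [hLdef, hJdef]
    simp only [add_mul, mul_add, mul_one, mul_assoc, e2, e3, e4, add_zero]
    rw [hKiP]
    rw [mul_sub, mul_sub, mul_sub, mul_one, ← mul_assoc P Q, hPQ, zero_mul]
    rw [← hPQ1]
    abel
  have hKL : K * (1 - Q * (A * D)) = L := by
    rw [mul_sub, mul_one, ← mul_assoc, hKQ, hLdef, hK1, hP1Q, sub_mul, one_mul]
    abel
  have hKinv : K⁻¹ = (1 - Q * (A * D)) * J := by
    apply Matrix.inv_eq_right_inv
    rw [← mul_assoc, hKL, hLJ]
  have hAinv : A⁻¹ = Φ := Matrix.nonsing_inv_nonsing_inv Φ hΦ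
  have hA1 : A⁻¹ * A = 1 := by rw [hAinv, hAdef]; exact Matrix.mul_nonsing_inv Φ hΦ
  have hMinv : M⁻¹ = K⁻¹ * A := by
    apply Matrix.inv_eq_right_inv
    rw [hKdef, Matrix.mul_inv_rev, mul_assoc, hA1, mul_one,
      Matrix.mul_nonsing_inv M hMu]
  have hfin : M⁻¹ = J * A - Q * (A * (D * (J * A))) := by
    rw [hMinv, hKinv]
    simp only [sub_mul, one_mul, mul_assoc]
  -- the reachability relation
  let R : Fin N → Fin N → Prop :=
    fun a b => a = b ∨ ∃ w : Gm.Walk a b, ∀ v ∈ w.support, v ∈ Z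
  have hRrefl : ∀ a, R a a := fun a => Or.inl rfl
  have hRsymm : ∀ a b, R a b → R b a := by
    rintro a b (rfl | ⟨w, hw⟩)
    · exact Or.inl rfl
    · exact Or.inr ⟨w.reverse, fun v hv => hw v (by
        rwa [SimpleGraph.Walk.support_reverse, List.mem_reverse] at hv)⟩
  have hRtrans : ∀ a b c, R a b → R b c → R a c := by
    rintro a b c (rfl | ⟨w, hw⟩) h2
    · exact h2
    · rcases h2 with rfl | ⟨w', hw'⟩
      · exact Or.inr ⟨w, hw⟩
      · refine Or.inr ⟨w.append w', fun v hv => ?_⟩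
        rw [SimpleGraph.Walk.mem_support_append_iff] at hv
        rcases hv with hv | hv
        · exact hw v hv
        · exact hw' v hv
  have hLR : ∀ i j, L i j ≠ 0 → R i j := by
    intro i j hL
    by_cases hij : i = j
    · exact Or.inl hij
    · right
      rw [hLdef, Matrix.add_apply, Matrix.one_apply_ne hij, zero_add, hPdef,
        Matrix.diagonal_mul, hDdef, Matrix.mul_diagonal] at hL
      have hiZ : i ∈ Z := by
        by_contra hx; rw [if_neg hx, zero_mul] at hL; exact hL rfl
      rw [if_pos hiZ, one_mul] at hL
      have hjZ : j ∈ Z := by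
        by_contra hx; rw [hd j hx, mul_zero] at hL; exact hL rfl
      have hAij : A i j ≠ 0 := left_ne_zero_of_mul hL
      have adj := hmoral i j hij hAij
      refine ⟨SimpleGraph.Walk.cons adj SimpleGraph.Walk.nil, fun v hv => ?_⟩
      simp only [SimpleGraph.Walk.support_cons, SimpleGraph.Walk.support_nil,
        List.mem_cons, List.mem_singleton, List.not_mem_nil, or_false] at hv
      rcases hv with rfl | rfl
      · exact hiZ
      · exact hjZ
  -- projection onto the R-class of q
  have hJsupp : ∀ i j, i ≠ j → J i j ≠ 0 →
      ∃ w : Gm.Walk i j, ∀ v ∈ w.support, v ∈ Z := by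
    intro i j hij hJ0
    by_contra hno
    set Pc : Matrix (Fin N) (Fin N) F :=
      Matrix.diagonal (fun r => if R r j then (1 : F) else 0) with hPcdef
    have hcomm : L * Pc = Pc * L := by
      ext a b
      rw [hPcdef, Matrix.mul_diagonal, Matrix.diagonal_mul]
      by_cases hL0 : L a b = 0
      · rw [hL0, zero_mul, mul_zero]
      · have hRab := hLR a b hL0
        have : R b j ↔ R a j :=
          ⟨fun hbj => hRtrans a b j hRab hbj, fun haj => hRtrans b a j (hRsymm a b hRab) haj⟩
        simp only [this]
        rw [mul_comm]
    have hcommJ : J * Pc = Pc * J := by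
      calc J * Pc
          = J * Pc * (L * J) := by rw [hLJ, mul_one]
        _ = J * (Pc * L) * J := by simp only [mul_assoc]
        _ = J * (L * Pc) * J := by rw [hcomm]
        _ = (J * L) * (Pc * J) := by simp only [mul_assoc]
        _ = Pc * J := by rw [hJL, one_mul]
    have hRnot : ¬ R i j := by
      rintro (rfl | hw)
      · exact hij rfl
      · exact hno hw
    have h1 : (J * Pc) i j = J i j := by
      rw [hPcdef, Matrix.mul_diagonal, if_pos (hRrefl j), mul_one]
    have h2 : (Pc * J) i j = 0 := by
      rw [hPcdef, Matrix.diagonal_mul, if_neg hRnot, zero_mul]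
    rw [hcommJ, h2] at h1
    exact hJ0 h1.symm
  -- main argument
  intro p q hpq hMq
  rw [hfin, Matrix.sub_apply] at hMq
  have hcases : (J * A) p q ≠ 0 ∨ (Q * (A * (D * (J * A)))) p q ≠ 0 := by
    by_contra hc
    push_neg at hc
    rw [hc.1, hc.2, sub_zero] at hMq
    exact hMq rfl
  rcases hcases with h1 | h2
  · -- case I
    rw [Matrix.mul_apply] at h1
    obtain ⟨r, -, hr⟩ := Finset.exists_ne_zero_of_sum_ne_zero h1
    have hJpr : J p r ≠ 0 := left_ne_zero_of_mul hr
    have hArq : A r q ≠ 0 := right_ne_zero_of_mul hr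
    by_cases hpr : p = r
    · subst hpr
      have adj := hmoral p q hpq hArq
      refine ⟨SimpleGraph.Walk.cons adj SimpleGraph.Walk.nil, fun v hv hvp hvq => ?_⟩
      simp only [SimpleGraph.Walk.support_cons, SimpleGraph.Walk.support_nil,
        List.mem_cons, List.not_mem_nil, or_false] at hv
      rcases hv with rfl | rfl
      · exact absurd rfl hvp
      · exact absurd rfl hvq
    · obtain ⟨w, hw⟩ := hJsupp p r hpr hJpr
      by_cases hrq : r = q
      · subst hrq
        exact ⟨w, fun v hv _ _ => hw v hv⟩
      · have adj := hmoral r q hrq hArq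
        refine ⟨w.append (SimpleGraph.Walk.cons adj SimpleGraph.Walk.nil),
          fun v hv hvp hvq => ?_⟩
        rw [SimpleGraph.Walk.mem_support_append_iff] at hv
        rcases hv with hv | hv
        · exact hw v hv
        · simp only [SimpleGraph.Walk.support_cons, SimpleGraph.Walk.support_nil,
            List.mem_cons, List.not_mem_nil, or_false] at hv
          rcases hv with rfl | rfl
          · exact hw v w.end_mem_support
          · exact absurd rfl hvq
  · -- case II
    rw [hQdef, Matrix.diagonal_mul] at h2
    have hpZ : p ∉ Z := by
      intro hx; rw [if_pos hx, zero_mul] at h2; exact h2 rfl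
    rw [if_neg hpZ, one_mul, Matrix.mul_apply] at h2
    obtain ⟨r, -, hr⟩ := Finset.exists_ne_zero_of_sum_ne_zero h2
    have hApr : A p r ≠ 0 := left_ne_zero_of_mul hr
    have hDr : (D * (J * A)) r q ≠ 0 := right_ne_zero_of_mul hr
    rw [hDdef, Matrix.diagonal_mul] at hDr
    have hdr : d r ≠ 0 := left_ne_zero_of_mul hDr
    have hrZ : r ∈ Z := by by_contra hx; exact hdr (hd r hx)
    have hJA : (J * A) r q ≠ 0 := right_ne_zero_of_mul hDr
    rw [Matrix.mul_apply] at hJA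
    obtain ⟨s, -, hs⟩ := Finset.exists_ne_zero_of_sum_ne_zero hJA
    have hJrs : J r s ≠ 0 := left_ne_zero_of_mul hs
    have hAsq : A s q ≠ 0 := right_ne_zero_of_mul hs
    have hpr : p ≠ r := fun e => hpZ (e ▸ hrZ)
    have adjpr := hmoral p r hpr hApr
    have hwalk : ∃ w : Gm.Walk r s, ∀ v ∈ w.support, v ∈ Z := by
      by_cases hrs : r = s
      · subst hrs
        exact ⟨SimpleGraph.Walk.nil, fun v hv => by
          simp only [SimpleGraph.Walk.support_nil, List.mem_singleton] at hv
          exact hv ▸ hrZ⟩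
      · exact hJsupp r s hrs hJrs
    obtain ⟨w, hw⟩ := hwalk
    by_cases hsq : s = q
    · subst hsq
      refine ⟨SimpleGraph.Walk.cons adjpr w, fun v hv hvp hvq => ?_⟩
      simp only [SimpleGraph.Walk.support_cons, List.mem_cons] at hv
      rcases hv with rfl | hv
      · exact absurd rfl hvp
      · exact hw v hv
    · have adjsq := hmoral s q hsq hAsq
      refine ⟨SimpleGraph.Walk.cons adjpr
        (w.append (SimpleGraph.Walk.cons adjsq SimpleGraph.Walk.nil)),
        fun v hv hvp hvq => ?_⟩
      simp only [SimpleGraph.Walk.support_cons, List.mem_cons] at hv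
      rcases hv with rfl | hv
      · exact absurd rfl hvp
      · rw [SimpleGraph.Walk.mem_support_append_iff] at hv
        rcases hv with hv | hv
        · exact hw v hv
        · simp only [SimpleGraph.Walk.support_cons, SimpleGraph.Walk.support_nil,
            List.mem_cons, List.not_mem_nil, or_false] at hv
          rcases hv with rfl | rfl
          · exact hw v w.end_mem_support
          · exact absurd rfl hvq

end Aux

/-- matrix-algebra content of Theorem 3: if the inverse of `Φ` has its
nonzero off-diagonal entries only at edges of a moral graph `Gm`, then the inverse of
the corrupted spectrum `Ψ = H·Φ·H' + Σ_{v∈Z} θ v • E_{vv}` has its nonzero off-diagonal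
entries only at neighbor pairs of the perturbed graph `Gm_Z`. -/
theorem stmt2 {F : Type*} [Field F] (N : ℕ) (hN : 1 ≤ N)
    (Gm : SimpleGraph (Fin N))
    (Φ : Matrix (Fin N) (Fin N) F) (hΦ : IsUnit Φ.det)
    (hmoral : ∀ p q : Fin N, p ≠ q → Φ⁻¹ p q ≠ 0 → Gm.Adj p q)
    (h h' : Fin N → F) (hh : ∀ i, h i ≠ 0) (hh' : ∀ i, h' i ≠ 0)
    (H H' : Matrix (Fin N) (Fin N) F)
    (hH : H = Matrix.diagonal h) (hH' : H' = Matrix.diagonal h')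
    (Z : Finset (Fin N)) (θ : Fin N → F) (hθ : ∀ v ∉ Z, θ v = 0)
    (Ψ : Matrix (Fin N) (Fin N) F)
    (hΨ : Ψ = H * Φ * H' + ∑ v ∈ Z, θ v • Matrix.single v v 1)
    (hΨu : IsUnit Ψ.det) :
    ∀ p q : Fin N, p ≠ q → Ψ⁻¹ p q ≠ 0 → PerturbedAdj Gm (↑Z) p q := by
  classical
  intro p q hpq hne
  set d : Fin N → F := fun v => θ v * (h v)⁻¹ * (h' v)⁻¹ with hddef
  have hd : ∀ v ∉ Z, d v = 0 := fun v hv => by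
    simp [hddef, hθ v hv]
  set M : Matrix (Fin N) (Fin N) F := Φ + Matrix.diagonal d with hMdef
  have hsum : (∑ v ∈ Z, θ v • Matrix.single v v (1 : F))
      = H * Matrix.diagonal d * H' := by
    rw [hH, hH', Matrix.diagonal_mul_diagonal, Matrix.diagonal_mul_diagonal]
    ext i j
    rw [Matrix.sum_apply, Matrix.diagonal_apply]
    by_cases hij : i = j
    · subst hij
      rw [if_pos rfl]
      by_cases hiZ : i ∈ Z
      · rw [Finset.sum_eq_single i]
        · rw [Matrix.smul_apply, Matrix.single_apply_same, smul_eq_mul, mul_one]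
          simp only [hddef]
          field_simp [hh i, hh' i]
        · intro b _ hbne
          have e0 : Matrix.single b b (1 : F) i i = 0 :=
            Matrix.single_apply_of_ne b b 1 i i (fun hc => hbne hc.1)
          rw [Matrix.smul_apply, e0, smul_zero]
        · intro hc; exact absurd hiZ hc
      · rw [Finset.sum_eq_zero, hd i hiZ, mul_zero, zero_mul]
        intro b hb
        have hbne : b ≠ i := fun e => hiZ (e ▸ hb)
        have e0 : Matrix.single b b (1 : F) i i = 0 :=
          Matrix.single_apply_of_ne b b 1 i i (fun hc => hbne hc.1)
        rw [Matrix.smul_apply, e0, smul_zero]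
    · rw [if_neg hij, Finset.sum_eq_zero]
      intro b _
      have e0 : Matrix.single b b (1 : F) i j = 0 :=
        Matrix.single_apply_of_ne b b 1 i j (fun hc => hij (hc.1.symm.trans hc.2))
      rw [Matrix.smul_apply, e0, smul_zero]
  have hΨM : Ψ = H * M * H' := by
    rw [hΨ, hsum, hMdef, mul_add, add_mul]
  have hMu : IsUnit M.det := by
    have e : Ψ.det = H.det * M.det * H'.det := by
      rw [hΨM, Matrix.det_mul, Matrix.det_mul]
    rw [isUnit_iff_ne_zero] at hΨu ⊢
    intro h0
    exact hΨu (by rw [e, h0, mul_zero, zero_mul])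
  have hHinv : H⁻¹ = Matrix.diagonal (fun i => (h i)⁻¹) := by
    apply Matrix.inv_eq_right_inv
    rw [hH, Matrix.diagonal_mul_diagonal, ← Matrix.diagonal_one]
    exact congrArg Matrix.diagonal (funext fun i => mul_inv_cancel₀ (hh i))
  have hH'inv : H'⁻¹ = Matrix.diagonal (fun i => (h' i)⁻¹) := by
    apply Matrix.inv_eq_right_inv
    rw [hH', Matrix.diagonal_mul_diagonal, ← Matrix.diagonal_one]
    exact congrArg Matrix.diagonal (funext fun i => mul_inv_cancel₀ (hh' i))
  have hMne : M⁻¹ p q ≠ 0 := by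
    have hinv : Ψ⁻¹ = H'⁻¹ * (M⁻¹ * H⁻¹) := by
      rw [hΨM, Matrix.mul_inv_rev, Matrix.mul_inv_rev]
    rw [hinv, hHinv, hH'inv, Matrix.diagonal_mul, Matrix.mul_diagonal] at hne
    intro h0
    rw [h0, zero_mul, mul_zero] at hne
    exact hne rfl
  obtain ⟨w, hw⟩ := key_lemma Gm Φ hΦ hmoral Z d hd M hMdef hMu p q hpq hMne
  exact ⟨hpq, w, fun v hv hvp hvq => Finset.mem_coe.mpr (hw v hv hvp hvq)⟩
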